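/- arXiv:1207.4273 — 2 statements merged into one kernel-verified Lean document; each statement's English description precedes it below -/
import Mathlib

section
/- Let $n : [0,\infty) \to [0,\infty)$ be nondecreasing, $A > 0$, $0 < \delta < d$. Define $N(r) := \int_0^r \frac{n(t) - n(0)}{t}\,dt$. If $N(r) = \frac{A r^d}{d} + O(r^{d-\delta})$ as $r \to \infty$, then $n(r) = A r^d + O(r^{d - \delta/2})$ as $r \to \infty$. -/
open MeasureTheory Set Filter

lemma rpow_diff_upper {t s d : ℝ} (ht : 0 < t) (hts : t ≤ s) (hd : 1 ≤ d) :
    s ^ d - t ^ d ≤ d * s ^ (d - 1) * (s - t) := by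
  have hs : 0 < s := lt_of_lt_of_le ht hts
  have hx : (-1 : ℝ) ≤ t / s - 1 := by
    have : 0 ≤ t / s := le_of_lt (div_pos ht hs)
    linarith
  have hB := one_add_mul_self_le_rpow_one_add hx hd
  have h1 : (1 : ℝ) + (t / s - 1) = t / s := by ring
  rw [h1, Real.div_rpow ht.le hs.le] at hB
  have hsd : 0 < s ^ d := Real.rpow_pos_of_pos hs d
  have hmul := mul_le_mul_of_nonneg_right hB hsd.le
  have hdiv : t ^ d / s ^ d * s ^ d = t ^ d := by field_simp
  rw [hdiv] at hmul
  have hkey : s ^ (d - 1) * s = s ^ d := by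
    rw [Real.rpow_sub_one hs.ne' d]; field_simp
  have hts' : s ^ d * (t / s) = s ^ (d - 1) * t := by
    rw [Real.rpow_sub_one hs.ne' d]; field_simp
  nlinarith [hmul, hkey, hts']

lemma rpow_diff_lower {t s d : ℝ} (ht : 0 < t) (hts : t ≤ s) (hd : 1 ≤ d) :
    d * t ^ (d - 1) * (s - t) ≤ s ^ d - t ^ d := by
  have hs : 0 < s := lt_of_lt_of_le ht hts
  have hx : (-1 : ℝ) ≤ s / t - 1 := by
    have : 0 ≤ s / t := le_of_lt (div_pos hs ht)
    linarith
  have hB := one_add_mul_self_le_rpow_one_add hx hd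
  have h1 : (1 : ℝ) + (s / t - 1) = s / t := by ring
  rw [h1, Real.div_rpow hs.le ht.le] at hB
  have htd : 0 < t ^ d := Real.rpow_pos_of_pos ht d
  have hmul := mul_le_mul_of_nonneg_right hB htd.le
  have hdiv : s ^ d / t ^ d * t ^ d = s ^ d := by field_simp
  rw [hdiv] at hmul
  have hkey : t ^ (d - 1) * t = t ^ d := by
    rw [Real.rpow_sub_one ht.ne' d]; field_simp
  have hts' : t ^ d * (s / t) = t ^ (d - 1) * s := by
    rw [Real.rpow_sub_one ht.ne' d]; field_simp
  nlinarith [hmul, hkey, hts']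

set_option maxHeartbeats 1600000 in
/-- If `N(r) = ∫₀^r (n(t)-n(0))/t dt = A r^d / d + O(r^(d-δ))` for a
nondecreasing nonnegative `n`, then `n(r) = A r^d + O(r^(d-δ/2))`. -/
theorem integrated_counting_to_counting
    (n : ℝ → ℝ) (hpos : ∀ t, 0 ≤ t → 0 ≤ n t)
    (hmono : MonotoneOn n (Set.Ici 0))
    (hint : ∀ r : ℝ, IntervalIntegrable (fun t => (n t - n 0) / t) volume 0 r)
    (A d δ : ℝ) (hA : 0 < A) (hd : 1 ≤ d) (hδ : 0 < δ) (hδd : δ < d)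
    (C R0 : ℝ) (hC : 0 < C) (hR0 : 0 < R0)
    (hO : ∀ r : ℝ, R0 ≤ r →
      |(∫ t in (0:ℝ)..r, (n t - n 0) / t) - A * r ^ d / d| ≤ C * r ^ (d - δ)) :
    ∃ C' R1 : ℝ, 0 < C' ∧ 0 < R1 ∧ ∀ r : ℝ, R1 ≤ r →
      |n r - A * r ^ d| ≤ C' * r ^ (d - δ / 2) := by
  have hn0 : 0 ≤ n 0 := hpos 0 le_rfl
  have hdpos : 0 < d := lt_trans hδ hδd
  refine ⟨n 0 + A * d * 2 ^ (d - 1) + 4 * C * 2 ^ (d - δ) + A * d + 2 * C + 1,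
    max (max 1 (2 * R0)) (2 ^ (2 / δ)), ?_, ?_, ?_⟩
  · have h1 : (0:ℝ) < 2 ^ (d - 1) := Real.rpow_pos_of_pos two_pos _
    have h2 : (0:ℝ) < 2 ^ (d - δ) := Real.rpow_pos_of_pos two_pos _
    nlinarith [mul_pos (mul_pos hA hdpos) h1, mul_pos hC h2, mul_pos hA hdpos]
  · exact lt_of_lt_of_le one_pos ((le_max_left 1 (2 * R0)).trans (le_max_left _ _))
  · intro r hr
    have hr1 : (1:ℝ) ≤ r := ((le_max_left 1 (2 * R0)).trans (le_max_left _ _)).trans hr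
    have hrR0 : 2 * R0 ≤ r := ((le_max_right 1 (2 * R0)).trans (le_max_left _ _)).trans hr
    have hr2 : (2:ℝ) ^ (2 / δ) ≤ r := (le_max_right _ _).trans hr
    have hrpos : (0:ℝ) < r := lt_of_lt_of_le one_pos hr1
    obtain ⟨α, hαdef⟩ : ∃ α : ℝ, α = r ^ (1 - δ / 2) := ⟨_, rfl⟩
    have hαpos : 0 < α := hαdef ▸ Real.rpow_pos_of_pos hrpos _
    have hhalf : (2:ℝ) ≤ r ^ (δ / 2) := by
      have he1 : (2 / δ) * (δ / 2) = 1 := by field_simp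
      have h2 : ((2:ℝ) ^ (2 / δ)) ^ (δ / 2) = 2 := by
        rw [← Real.rpow_mul (by norm_num : (0:ℝ) ≤ 2), he1, Real.rpow_one]
      calc (2:ℝ) = ((2:ℝ) ^ (2 / δ)) ^ (δ / 2) := h2.symm
        _ ≤ r ^ (δ / 2) := Real.rpow_le_rpow (le_of_lt (Real.rpow_pos_of_pos two_pos _)) hr2
            (by positivity)
    have hαr : α * r ^ (δ / 2) = r := by
      rw [hαdef, ← Real.rpow_add hrpos]
      norm_num
    have hα2 : 2 * α ≤ r := by
      have := mul_le_mul_of_nonneg_left hhalf hαpos.le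
      linarith [hαr]
    have hqpos : 0 < r - α := by linarith
    have hR0q : R0 ≤ r - α := by linarith
    have hR0r : R0 ≤ r := by linarith
    have hR0s : R0 ≤ r + α := by linarith
    have hs_pos : (0:ℝ) < r + α := by linarith
    -- integrability on subintervals
    have hsubI : ∀ a b : ℝ, 0 ≤ a → a ≤ b →
        IntervalIntegrable (fun t => (n t - n 0) / t) volume a b := by
      intro a b ha hab
      refine (hint b).mono_set (Set.uIcc_subset_uIcc ?_ ?_)
      · exact Set.mem_uIcc.mpr (Or.inl ⟨ha, hab⟩)
      · exact Set.mem_uIcc.mpr (Or.inl ⟨ha.trans hab, le_rfl⟩)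
    have hsplit : ∀ a b : ℝ, 0 ≤ a → a ≤ b →
        (∫ t in a..b, (n t - n 0) / t) =
          (∫ t in (0:ℝ)..b, (n t - n 0) / t) - (∫ t in (0:ℝ)..a, (n t - n 0) / t) := by
      intro a b ha hab
      have h := intervalIntegral.integral_add_adjacent_intervals (hint a) (hsubI a b ha hab)
      linarith
    -- monotone comparison A (above r)
    have hIncA : (n r - n 0) * (α / (r + α)) ≤ ∫ t in r..(r + α), (n t - n 0) / t := by
      have hle : r ≤ r + α := by linarith
      have hpt : ∀ t ∈ Set.Icc r (r + α),
          (fun _ : ℝ => (n r - n 0) / (r + α)) t ≤ (fun t => (n t - n 0) / t) t := by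
        intro t ht
        obtain ⟨ht1, ht2⟩ := ht
        have htpos : 0 < t := lt_of_lt_of_le hrpos ht1
        have h1 : n r ≤ n t := hmono (Set.mem_Ici.mpr hrpos.le) (Set.mem_Ici.mpr htpos.le) ht1
        have h2 : n 0 ≤ n r := hmono (Set.mem_Ici.mpr le_rfl) (Set.mem_Ici.mpr hrpos.le) hrpos.le
        exact div_le_div₀ (by linarith) (by linarith) htpos ht2
      have hmon := intervalIntegral.integral_mono_on hle intervalIntegrable_const
        (hsubI r (r + α) hrpos.le hle) hpt
      have hc : (∫ _t in r..(r + α), (n r - n 0) / (r + α))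
          = α * ((n r - n 0) / (r + α)) := by
        rw [intervalIntegral.integral_const, smul_eq_mul]; ring
      rw [hc] at hmon
      calc (n r - n 0) * (α / (r + α)) = α * ((n r - n 0) / (r + α)) := by ring
        _ ≤ _ := hmon
    -- monotone comparison B (below r)
    have hIncB : (∫ t in (r - α)..r, (n t - n 0) / t) ≤ (n r - n 0) * (α / (r - α)) := by
      have hle : r - α ≤ r := by linarith
      have hpt : ∀ t ∈ Set.Icc (r - α) r,
          (fun t => (n t - n 0) / t) t ≤ (fun _ : ℝ => (n r - n 0) / (r - α)) t := by
        intro t ht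
        obtain ⟨ht1, ht2⟩ := ht
        have htpos : 0 < t := lt_of_lt_of_le hqpos ht1
        have h1 : n t ≤ n r := hmono (Set.mem_Ici.mpr htpos.le) (Set.mem_Ici.mpr hrpos.le) ht2
        have h2 : n 0 ≤ n t := hmono (Set.mem_Ici.mpr le_rfl) (Set.mem_Ici.mpr htpos.le) htpos.le
        exact div_le_div₀ (by linarith) (by linarith) hqpos ht1
      have hmon := intervalIntegral.integral_mono_on hle
        (hsubI (r - α) r hqpos.le hle) intervalIntegrable_const hpt
      have hc : (∫ _t in (r - α)..r, (n r - n 0) / (r - α))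
          = α * ((n r - n 0) / (r - α)) := by
        rw [intervalIntegral.integral_const, smul_eq_mul]; ring
      rw [hc] at hmon
      calc (∫ t in (r - α)..r, (n t - n 0) / t) ≤ α * ((n r - n 0) / (r - α)) := hmon
        _ = (n r - n 0) * (α / (r - α)) := by ring
    -- O-bounds
    have hOr := abs_le.mp (hO r hR0r)
    have hOs := abs_le.mp (hO (r + α) hR0s)
    have hOq := abs_le.mp (hO (r - α) hR0q)
    -- rpow difference bounds
    have hub : (r + α) ^ d - r ^ d ≤ d * (r + α) ^ (d - 1) * α := by
      have h := rpow_diff_upper hrpos (by linarith : r ≤ r + α) hd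
      have e : r + α - r = α := by ring
      rwa [e] at h
    have hlb : d * (r - α) ^ (d - 1) * α ≤ r ^ d - (r - α) ^ d := by
      have h := rpow_diff_lower hqpos (by linarith : r - α ≤ r) hd
      have e : r - (r - α) = α := by ring
      rwa [e] at h
    have hub' : r ^ d - (r - α) ^ d ≤ d * r ^ (d - 1) * α := by
      have h := rpow_diff_upper hqpos (by linarith : r - α ≤ r) hd
      have e : r - (r - α) = α := by ring
      rwa [e] at h
    -- upper bound on the increment integral above r
    have hIub : (∫ t in r..(r + α), (n t - n 0) / t)
        ≤ A * (r + α) ^ (d - 1) * α + 2 * C * (r + α) ^ (d - δ) := by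
      rw [hsplit r (r + α) hrpos.le (by linarith)]
      have h1 := hOs.2
      have h2 := hOr.1
      have hmrd : r ^ (d - δ) ≤ (r + α) ^ (d - δ) :=
        Real.rpow_le_rpow hrpos.le (by linarith) (by linarith)
      have hCT := mul_le_mul_of_nonneg_left hmrd hC.le
      have hAd := mul_le_mul_of_nonneg_left hub (le_of_lt (div_pos hA hdpos))
      have e1 : A * (r + α) ^ d / d - A * r ^ d / d = (A / d) * ((r + α) ^ d - r ^ d) := by
        ring
      have e2 : (A / d) * (d * (r + α) ^ (d - 1) * α) = A * (r + α) ^ (d - 1) * α := by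
        field_simp
      linarith
    -- lower bound on the increment integral below r
    have hIlb : A * (r - α) ^ (d - 1) * α - 2 * C * r ^ (d - δ)
        ≤ ∫ t in (r - α)..r, (n t - n 0) / t := by
      rw [hsplit (r - α) r hqpos.le (by linarith)]
      have h1 := hOr.1
      have h2 := hOq.2
      have hmrd : (r - α) ^ (d - δ) ≤ r ^ (d - δ) :=
        Real.rpow_le_rpow hqpos.le (by linarith) (by linarith)
      have hCT := mul_le_mul_of_nonneg_left hmrd hC.le
      have hAd := mul_le_mul_of_nonneg_left hlb (le_of_lt (div_pos hA hdpos))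
      have e1 : A * r ^ d / d - A * (r - α) ^ d / d = (A / d) * (r ^ d - (r - α) ^ d) := by
        ring
      have e2 : (A / d) * (d * (r - α) ^ (d - 1) * α) = A * (r - α) ^ (d - 1) * α := by
        field_simp
      linarith
    -- translate to bounds on n r
    have hP : (r + α) ^ (d - 1) * (r + α) = (r + α) ^ d := by
      rw [Real.rpow_sub_one hs_pos.ne' d]; field_simp
    have hQ : (r - α) ^ (d - 1) * (r - α) = (r - α) ^ d := by
      rw [Real.rpow_sub_one hqpos.ne' d]; field_simp
    have hup2 : n r - n 0 ≤ A * (r + α) ^ d + 2 * C * (r + α) ^ (d - δ) * ((r + α) / α) := by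
      have h := hIncA.trans hIub
      have hmul := mul_le_mul_of_nonneg_right h (le_of_lt (div_pos hs_pos hαpos))
      have e0 : n r - n 0 = (n r - n 0) * (α / (r + α)) * ((r + α) / α) := by
        field_simp
      have e : (A * (r + α) ^ (d - 1) * α + 2 * C * (r + α) ^ (d - δ)) * ((r + α) / α)
          = A * ((r + α) ^ (d - 1) * (r + α)) + 2 * C * (r + α) ^ (d - δ) * ((r + α) / α) := by
        field_simp
      rw [e, hP] at hmul
      linarith [e0 ▸ hmul]
    have hlow2 : A * (r - α) ^ d - 2 * C * r ^ (d - δ) * ((r - α) / α) ≤ n r - n 0 := by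
      have h := hIlb.trans hIncB
      have hmul := mul_le_mul_of_nonneg_right h (le_of_lt (div_pos hqpos hαpos))
      have e0 : (n r - n 0) * (α / (r - α)) * ((r - α) / α) = n r - n 0 := by
        field_simp
      have e : (A * (r - α) ^ (d - 1) * α - 2 * C * r ^ (d - δ)) * ((r - α) / α)
          = A * ((r - α) ^ (d - 1) * (r - α)) - 2 * C * r ^ (d - δ) * ((r - α) / α) := by
        field_simp
      rw [e, hQ, e0] at hmul
      linarith
    -- size estimates in terms of r ^ (d - δ/2)
    have hrds : r ^ (d - δ) * r ^ (δ / 2) = r ^ (d - δ / 2) := by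
      rw [← Real.rpow_add hrpos]; congr 1; ring
    have hrdd : r ^ (d - 1) * r ^ (1 - δ / 2) = r ^ (d - δ / 2) := by
      rw [← Real.rpow_add hrpos]; congr 1; ring
    have hra : (r + α) / α ≤ 2 * r ^ (δ / 2) := by
      rw [div_le_iff₀ hαpos]
      linarith [hαr, hα2]
    have hra2 : (r - α) / α ≤ r ^ (δ / 2) := by
      rw [div_le_iff₀ hαpos]
      linarith [hαr, hαpos]
    have hra2' : 0 ≤ (r - α) / α := le_of_lt (div_pos hqpos hαpos)
    have h2r : (r + α) ^ (d - 1) ≤ 2 ^ (d - 1) * r ^ (d - 1) := by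
      rw [← Real.mul_rpow (by norm_num : (0:ℝ) ≤ 2) hrpos.le]
      exact Real.rpow_le_rpow (by linarith) (by linarith) (by linarith)
    have h2s : (r + α) ^ (d - δ) ≤ 2 ^ (d - δ) * r ^ (d - δ) := by
      rw [← Real.mul_rpow (by norm_num : (0:ℝ) ≤ 2) hrpos.le]
      exact Real.rpow_le_rpow (by linarith) (by linarith) (by linarith)
    have hone : 1 ≤ r ^ (d - δ / 2) := Real.one_le_rpow hr1 (by linarith)
    have hXpos : 0 < r ^ (d - δ / 2) := lt_of_lt_of_le one_pos hone
    -- upper bound assembled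
    have hstep1 : 2 * C * (r + α) ^ (d - δ) * ((r + α) / α)
        ≤ 4 * C * 2 ^ (d - δ) * r ^ (d - δ / 2) := by
      have hb : 0 ≤ (r + α) / α := le_of_lt (div_pos hs_pos hαpos)
      have h1 : 2 * C * (r + α) ^ (d - δ) ≤ 2 * C * (2 ^ (d - δ) * r ^ (d - δ)) :=
        mul_le_mul_of_nonneg_left h2s (by positivity)
      calc 2 * C * (r + α) ^ (d - δ) * ((r + α) / α)
          ≤ 2 * C * (2 ^ (d - δ) * r ^ (d - δ)) * (2 * r ^ (δ / 2)) := by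
            apply mul_le_mul h1 hra hb (by positivity)
        _ = 4 * C * 2 ^ (d - δ) * (r ^ (d - δ) * r ^ (δ / 2)) := by ring
        _ = 4 * C * 2 ^ (d - δ) * r ^ (d - δ / 2) := by rw [hrds]
    have hstep2 : A * ((r + α) ^ d - r ^ d) ≤ A * d * 2 ^ (d - 1) * r ^ (d - δ / 2) := by
      have h2 : d * (r + α) ^ (d - 1) * α ≤ d * (2 ^ (d - 1) * r ^ (d - 1)) * α :=
        mul_le_mul_of_nonneg_right (mul_le_mul_of_nonneg_left h2r (by linarith)) hαpos.le
      have h3 : d * (2 ^ (d - 1) * r ^ (d - 1)) * α = d * 2 ^ (d - 1) * r ^ (d - δ / 2) := by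
        rw [hαdef]
        calc d * (2 ^ (d - 1) * r ^ (d - 1)) * r ^ (1 - δ / 2)
            = d * 2 ^ (d - 1) * (r ^ (d - 1) * r ^ (1 - δ / 2)) := by ring
          _ = d * 2 ^ (d - 1) * r ^ (d - δ / 2) := by rw [hrdd]
      have := mul_le_mul_of_nonneg_left (hub.trans (h2.trans_eq h3)) hA.le
      linarith
    have hstep3 : A * (r ^ d - (r - α) ^ d) ≤ A * d * r ^ (d - δ / 2) := by
      have h2 : d * r ^ (d - 1) * α ≤ d * r ^ (d - δ / 2) := by
        have : d * r ^ (d - 1) * α = d * (r ^ (d - 1) * r ^ (1 - δ / 2)) := by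
          rw [hαdef]; ring
        rw [this, hrdd]
      have := mul_le_mul_of_nonneg_left (hub'.trans h2) hA.le
      linarith
    have hstep4 : 2 * C * r ^ (d - δ) * ((r - α) / α) ≤ 2 * C * r ^ (d - δ / 2) := by
      have h1 : 2 * C * r ^ (d - δ) * ((r - α) / α) ≤ 2 * C * r ^ (d - δ) * r ^ (δ / 2) :=
        mul_le_mul_of_nonneg_left hra2 (by positivity)
      calc 2 * C * r ^ (d - δ) * ((r - α) / α) ≤ 2 * C * r ^ (d - δ) * r ^ (δ / 2) := h1
        _ = 2 * C * (r ^ (d - δ) * r ^ (δ / 2)) := by ring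
        _ = 2 * C * r ^ (d - δ / 2) := by rw [hrds]
    have hn0r : n 0 ≤ n 0 * r ^ (d - δ / 2) := le_mul_of_one_le_right hn0 hone
    -- final combination
    rw [abs_le]
    constructor
    · -- lower:  -(C' r^X) ≤ n r - A r^d
      have hkey : A * r ^ d - n r ≤ (A * d + 2 * C) * r ^ (d - δ / 2) := by
        linarith [hlow2, hstep3, hstep4, hn0]
      have hx1 : 0 ≤ n 0 * r ^ (d - δ / 2) := by positivity
      have hx2 : 0 ≤ A * d * 2 ^ (d - 1) * r ^ (d - δ / 2) := by positivity
      have hx3 : 0 ≤ 4 * C * 2 ^ (d - δ) * r ^ (d - δ / 2) := by positivity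
      have hx4 : 0 ≤ 1 * r ^ (d - δ / 2) := by positivity
      linarith [hkey]
    · have hkey : n r - A * r ^ d
          ≤ (n 0 + A * d * 2 ^ (d - 1) + 4 * C * 2 ^ (d - δ)) * r ^ (d - δ / 2) := by
        linarith [hup2, hstep1, hstep2, hn0r]
      have hx4 : 0 ≤ 1 * r ^ (d - δ / 2) := by positivity
      have hx5 : 0 ≤ A * d * r ^ (d - δ / 2) := by positivity
      have hx6 : 0 ≤ 2 * C * r ^ (d - δ / 2) := by positivity
      linarith [hkey]
end

section
/- Let $\rho(z) = \log\frac{1+\sqrt{1-z^2}}{z} - \sqrt{1-z^2}$ for real $z \in (0,1)$. Then $|\rho(z)| \sim \frac{2\sqrt{2}}{3}|1-z|^{3/2}$ as $z \to 1^-$; that is, $\lim_{z \to 1^-} \frac{\rho(z)}{(1-z)^{3/2}} = \frac{2\sqrt{2}}{3}$. -/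
open Set Filter

/-- The phase function `ρ(z) = log((1 + √(1-z²))/z) - √(1-z²)` on the real interval. -/
noncomputable def rhoReal (z : ℝ) : ℝ :=
  Real.log ((1 + Real.sqrt (1 - z ^ 2)) / z) - Real.sqrt (1 - z ^ 2)

lemma rhoReal_hasDerivAt {z : ℝ} (hz : z ∈ Set.Ioo (0:ℝ) 1) :
    HasDerivAt rhoReal (-Real.sqrt (1 - z ^ 2) / z) z := by
  obtain ⟨hz0, hz1⟩ := hz
  have h1 : (0:ℝ) < 1 - z ^ 2 := by nlinarith
  set s := Real.sqrt (1 - z ^ 2) with hs_def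
  have hs_pos : 0 < s := Real.sqrt_pos.mpr h1
  have hs_sq : s ^ 2 = 1 - z ^ 2 := Real.sq_sqrt h1.le
  have hF : ∀ᶠ w in nhds z, rhoReal w =
      Real.log (1 + Real.sqrt (1 - w ^ 2)) - Real.log w - Real.sqrt (1 - w ^ 2) := by
    have hmem : Set.Ioo (0:ℝ) 1 ∈ nhds z := Ioo_mem_nhds hz0 hz1
    filter_upwards [hmem] with w hw
    obtain ⟨hw0, hw1⟩ := hw
    have h1w : (0:ℝ) ≤ 1 - w ^ 2 := by nlinarith
    have hnum : (0:ℝ) < 1 + Real.sqrt (1 - w ^ 2) := by positivity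
    rw [rhoReal, Real.log_div hnum.ne' hw0.ne']
  have hinner : HasDerivAt (fun w : ℝ => 1 - w ^ 2) (-(2 * z)) z := by
    simpa using ((hasDerivAt_pow 2 z).const_sub 1)
  have hsqrt : HasDerivAt (fun w : ℝ => Real.sqrt (1 - w ^ 2)) (-(2 * z) / (2 * s)) z :=
    hinner.sqrt h1.ne'
  have hlog1 : HasDerivAt (fun w : ℝ => Real.log (1 + Real.sqrt (1 - w ^ 2)))
      ((-(2 * z) / (2 * s)) / (1 + s)) z := by
    have h := hsqrt.const_add 1
    exact h.log (by positivity)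
  have hlog2 : HasDerivAt Real.log (1 / z) z := by
    simpa using Real.hasDerivAt_log hz0.ne'
  have hF' : HasDerivAt (fun w : ℝ =>
      Real.log (1 + Real.sqrt (1 - w ^ 2)) - Real.log w - Real.sqrt (1 - w ^ 2))
      ((-(2 * z) / (2 * s)) / (1 + s) - 1 / z - (-(2 * z) / (2 * s))) z :=
    (hlog1.sub hlog2).sub hsqrt
  have heq : (-(2 * z) / (2 * s)) / (1 + s) - 1 / z - (-(2 * z) / (2 * s)) = -s / z := by
    have h1s : (0:ℝ) < 1 + s := by positivity
    field_simp
    ring_nf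
    linear_combination s * hs_sq
  rw [heq] at hF'
  exact hF'.congr_of_eventuallyEq hF

/-- `ρ(z) / (1-z)^(3/2) → 2√2/3` as `z → 1⁻`. -/
theorem rhoReal_turning_point :
    Tendsto (fun z : ℝ => rhoReal z / (1 - z) ^ ((3:ℝ)/2))
      (nhdsWithin 1 (Iio 1)) (nhds (2 * Real.sqrt 2 / 3)) := by
  have hIoo : Set.Ioo (0:ℝ) 1 ∈ nhdsWithin (1:ℝ) (Set.Iio 1) :=
    Ioo_mem_nhdsLT_of_mem (by constructor <;> norm_num)
  apply HasDerivAt.lhopital_zero_nhdsLT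
    (f' := fun z => -Real.sqrt (1 - z ^ 2) / z)
    (g' := fun z => (3/2 : ℝ) * (1 - z) ^ ((1:ℝ)/2) * (-1))
  · filter_upwards [hIoo] with z hz
    exact rhoReal_hasDerivAt hz
  · filter_upwards [hIoo] with z hz
    have h := (Real.hasDerivAt_rpow_const (p := (3:ℝ)/2) (x := 1 - z)
      (Or.inr (by norm_num))).comp z ((hasDerivAt_id z).const_sub 1)
    exact h.congr_deriv (by norm_num)
  · filter_upwards [hIoo] with z hz
    have h2 : (0:ℝ) < (1 - z) ^ ((1:ℝ)/2) := Real.rpow_pos_of_pos (by linarith [hz.2]) _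
    intro h
    nlinarith
  · -- rhoReal → 0
    have hsq : ContinuousAt (fun z : ℝ => Real.sqrt (1 - z ^ 2)) 1 :=
      (Real.continuous_sqrt.comp (by continuity)).continuousAt
    have hlog : ContinuousAt (fun z : ℝ => Real.log ((1 + Real.sqrt (1 - z ^ 2)) / z)) 1 := by
      apply ContinuousAt.log
      · exact (continuousAt_const.add hsq).div continuousAt_id (by norm_num)
      · simp
    have hc : ContinuousAt rhoReal 1 := hlog.sub hsq
    have h0 : rhoReal 1 = 0 := by simp [rhoReal]
    have := hc.continuousWithinAt (s := Set.Iio (1:ℝ))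
    rw [ContinuousWithinAt, h0] at this
    exact this
  · have hc : ContinuousAt (fun z : ℝ => (1 - z) ^ ((3:ℝ)/2)) 1 :=
      ContinuousAt.rpow_const (continuous_const.sub continuous_id).continuousAt (Or.inr (by norm_num))
    have h0 : ((1:ℝ) - 1) ^ ((3:ℝ)/2) = 0 := by
      norm_num
    have := hc.continuousWithinAt (s := Set.Iio (1:ℝ))
    rw [ContinuousWithinAt] at this
    simpa [h0] using this
  · -- quotient of derivatives
    have hcong : ∀ᶠ z in nhdsWithin (1:ℝ) (Set.Iio 1),
        (2/3 : ℝ) * Real.sqrt (1 + z) / z =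
        (-Real.sqrt (1 - z ^ 2) / z) / ((3/2 : ℝ) * (1 - z) ^ ((1:ℝ)/2) * (-1)) := by
      filter_upwards [hIoo] with z hz
      obtain ⟨hz0, hz1⟩ := hz
      have h1z : (0:ℝ) < 1 - z := by linarith
      have h1pz : (0:ℝ) < 1 + z := by linarith
      have hsplit : Real.sqrt (1 - z ^ 2) = Real.sqrt (1 - z) * Real.sqrt (1 + z) := by
        rw [← Real.sqrt_mul h1z.le]
        ring_nf
      have hrpow : (1 - z) ^ ((1:ℝ)/2) = Real.sqrt (1 - z) :=
        (Real.sqrt_eq_rpow _).symm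
      have hsz : (0:ℝ) < Real.sqrt (1 - z) := Real.sqrt_pos.mpr h1z
      rw [hsplit, hrpow]
      field_simp
    have hlim : Tendsto (fun z : ℝ => (2/3 : ℝ) * Real.sqrt (1 + z) / z)
        (nhdsWithin (1:ℝ) (Set.Iio 1)) (nhds (2 * Real.sqrt 2 / 3)) := by
      have hc : ContinuousAt (fun z : ℝ => (2/3 : ℝ) * Real.sqrt (1 + z) / z) 1 := by
        apply ContinuousAt.div
        · exact continuousAt_const.mul (Real.continuous_sqrt.comp (by continuity)).continuousAt
        · exact continuousAt_id
        · norm_num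
      have := hc.continuousWithinAt (s := Set.Iio (1:ℝ))
      rw [ContinuousWithinAt] at this
      convert this using 2
      norm_num
      ring
    exact hlim.congr' hcong
end
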